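/- arXiv:2403.00916 — 2 statements merged into one kernel-verified Lean document; each statement's English description precedes it below -/
import Mathlib

section
/- The Minkowski causal order on M₁ = ℝ × ℝ (with (t,x) ⪯ (s,y) iff |y − x| ≤ s − t) is not conical: the two-element sets L₁ = {(0,0), (0,2)} and L₂ = {(1/2, 1/2), (0,2)} are distinct, each consists of two incomparable points (hence span(L₁) = L₁ and span(L₂) = L₂), and yet f(L₁) = f(L₂). -/
/-- 1+1-dimensional Minkowski space-time `M₁ := ℝ × ℝ` (time, space). -/
structure Mink1 where
  t : ℝ
  x : ℝ

/-- The Minkowski causal order on `M₁`: `(t,x) ⪯ (s,y)` iff `|y − x| ≤ s − t`. -/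
instance : PartialOrder Mink1 where
  le p q := |q.x - p.x| ≤ q.t - p.t
  le_refl p := by simp
  le_trans p q r hpq hqr := by
    have hpq' : |q.x - p.x| ≤ q.t - p.t := hpq
    have hqr' : |r.x - q.x| ≤ r.t - q.t := hqr
    have htri : |r.x - p.x| ≤ |r.x - q.x| + |q.x - p.x| := abs_sub_le _ _ _
    show |r.x - p.x| ≤ r.t - p.t
    linarith
  le_antisymm p q hpq hqp := by
    have hpq' : |q.x - p.x| ≤ q.t - p.t := hpq
    have hqp' : |p.x - q.x| ≤ p.t - q.t := hqp
    have hrev : |p.x - q.x| = |q.x - p.x| := abs_sub_comm _ _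
    have hnn : (0:ℝ) ≤ |q.x - p.x| := abs_nonneg _
    have hx0 : |q.x - p.x| = 0 := by linarith
    have hx : q.x = p.x := sub_eq_zero.mp (abs_eq_zero.mp hx0)
    have ht : p.t = q.t := by linarith
    cases p; cases q; simp_all

/-- The causal future `J⁺(p) = {q : p ≤ q}` of a point in a partially ordered set. -/
def Jplus {T : Type*} [PartialOrder T] (p : T) : Set T := {q : T | p ≤ q}

/-- The joint future `f(L) = ⋂_{p ∈ L} J⁺(p)` of a subset of a poset (with `f(∅) = T`). -/
def jointFuture {T : Type*} [PartialOrder T] (L : Set T) : Set T := ⋂ p ∈ L, Jplus p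

/-- The spanning set `span(L)`: the union of all subsets `L' ⊆ L` with
`f(L') = f(L)` such that no strict subset `L'' ⊊ L'` satisfies `f(L'') = f(L)`. -/
def spanS {T : Type*} [PartialOrder T] (L : Set T) : Set T :=
  {x : T | ∃ L' : Set T, L' ⊆ L ∧ x ∈ L' ∧ jointFuture L' = jointFuture L ∧
    ∀ L'' : Set T, L'' ⊂ L' → jointFuture L'' ≠ jointFuture L}

/-- A poset is conical if for all nonempty finite subsets `L₁, L₂`,
`f(L₁) = f(L₂)` implies `span(L₁) = span(L₂)`. -/
def Conical (T : Type*) [PartialOrder T] : Prop :=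
  ∀ L₁ L₂ : Set T, L₁.Finite → L₂.Finite → L₁.Nonempty → L₂.Nonempty →
    jointFuture L₁ = jointFuture L₂ → spanS L₁ = spanS L₂


lemma Mink1.le_def (p q : Mink1) : p ≤ q ↔ |q.x - p.x| ≤ q.t - p.t := Iff.rfl

lemma mem_jointFuture {T : Type*} [PartialOrder T] {L : Set T} {q : T} :
    q ∈ jointFuture L ↔ ∀ p ∈ L, p ≤ q := by
  simp [jointFuture, Jplus]

lemma spanS_pair {T : Type*} [PartialOrder T] {a b : T} (hab : ¬ a ≤ b) (hba : ¬ b ≤ a) :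
    spanS ({a, b} : Set T) = {a, b} := by
  ext x
  constructor
  · rintro ⟨L', hsub, hx, -, -⟩
    exact hsub hx
  · intro hx
    refine ⟨{a, b}, subset_rfl, hx, rfl, ?_⟩
    intro L'' hss heq
    obtain ⟨c, hc, hcn⟩ := Set.exists_of_ssubset hss
    rcases hc with rfl | rfl
    · -- c = a, so a ∉ L'', L'' ⊆ {b}
      have hb : b ∈ jointFuture L'' := by
        rw [mem_jointFuture]
        intro p hp
        rcases hss.subset hp with rfl | rfl
        · exact absurd hp hcn
        · exact le_refl _
      rw [heq, mem_jointFuture] at hb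
      exact hab (hb _ (Or.inl rfl))
    · have ha : a ∈ jointFuture L'' := by
        rw [mem_jointFuture]
        intro p hp
        rcases hss.subset hp with rfl | rfl
        · exact le_refl _
        · exact absurd hp hcn
      rw [heq, mem_jointFuture] at ha
      exact hba (ha _ (Or.inr rfl))

/-- 1+1-Minkowski space-time is not conical: the sets `L₁ = {(0,0), (0,2)}` and
`L₂ = {(1/2, 1/2), (0,2)}` are distinct, each consists of two incomparable points
(hence equals its own spanning set), yet they have the same joint future. -/
theorem mink1_not_conical :
    ({⟨0, 0⟩, ⟨0, 2⟩} : Set Mink1) ≠ ({⟨1/2, 1/2⟩, ⟨0, 2⟩} : Set Mink1) ∧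
    (¬ (⟨0, 0⟩ : Mink1) ≤ ⟨0, 2⟩) ∧ (¬ (⟨0, 2⟩ : Mink1) ≤ ⟨0, 0⟩) ∧
    (¬ (⟨1/2, 1/2⟩ : Mink1) ≤ ⟨0, 2⟩) ∧ (¬ (⟨0, 2⟩ : Mink1) ≤ ⟨1/2, 1/2⟩) ∧
    spanS ({⟨0, 0⟩, ⟨0, 2⟩} : Set Mink1) = ({⟨0, 0⟩, ⟨0, 2⟩} : Set Mink1) ∧
    spanS ({⟨1/2, 1/2⟩, ⟨0, 2⟩} : Set Mink1) = ({⟨1/2, 1/2⟩, ⟨0, 2⟩} : Set Mink1) ∧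
    jointFuture ({⟨0, 0⟩, ⟨0, 2⟩} : Set Mink1) =
      jointFuture ({⟨1/2, 1/2⟩, ⟨0, 2⟩} : Set Mink1) ∧
    ¬ Conical Mink1 := by
  have hne : ({⟨0, 0⟩, ⟨0, 2⟩} : Set Mink1) ≠ ({⟨1/2, 1/2⟩, ⟨0, 2⟩} : Set Mink1) := by
    intro h
    have h0 : (⟨0, 0⟩ : Mink1) ∈ ({⟨1/2, 1/2⟩, ⟨0, 2⟩} : Set Mink1) := by
      rw [← h]; exact Or.inl rfl
    simp only [Set.mem_insert_iff, Set.mem_singleton_iff] at h0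
    rcases h0 with h0 | h0 <;> exact absurd (congrArg Mink1.x h0) (by norm_num)
  have h1 : ¬ (⟨0, 0⟩ : Mink1) ≤ ⟨0, 2⟩ := by
    rw [Mink1.le_def, abs_le]; norm_num
  have h2 : ¬ (⟨0, 2⟩ : Mink1) ≤ ⟨0, 0⟩ := by
    rw [Mink1.le_def, abs_le]; norm_num
  have h3 : ¬ (⟨1/2, 1/2⟩ : Mink1) ≤ ⟨0, 2⟩ := by
    rw [Mink1.le_def, abs_le]; norm_num
  have h4 : ¬ (⟨0, 2⟩ : Mink1) ≤ ⟨1/2, 1/2⟩ := by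
    rw [Mink1.le_def, abs_le]; norm_num
  have hs1 := spanS_pair h1 h2
  have hs2 := spanS_pair h3 h4
  have hjf : jointFuture ({⟨0, 0⟩, ⟨0, 2⟩} : Set Mink1) =
      jointFuture ({⟨1/2, 1/2⟩, ⟨0, 2⟩} : Set Mink1) := by
    clear hne h1 h2 h3 h4 hs1 hs2
    ext q
    simp only [mem_jointFuture, Set.mem_insert_iff, Set.mem_singleton_iff, forall_eq_or_imp,
      forall_eq, Mink1.le_def]
    simp only [abs_le]
    constructor
    · rintro ⟨⟨a1, a2⟩, b1, b2⟩
      refine ⟨⟨by linarith, by linarith⟩, by linarith, by linarith⟩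
    · rintro ⟨⟨a1, a2⟩, b1, b2⟩
      refine ⟨⟨by linarith, by linarith⟩, by linarith, by linarith⟩
  refine ⟨hne, h1, h2, h3, h4, hs1, hs2, hjf, ?_⟩
  intro hcon
  have := hcon _ _ ((Set.finite_singleton _).insert _)
    ((Set.finite_singleton _).insert _)
    ⟨_, Or.inl rfl⟩ ⟨_, Or.inl rfl⟩ hjf
  rw [hs1, hs2] at this
  exact hne this
end

section
/- Let D be an intervention family on V and let X, Y, Z be pairwise disjoint finite subsets of V with X, Y nonempty. If X ⊨ Y|do(Z) holds and is Clus₃ (that is, Z ≠ ∅ and no s_Z ⊊ Z satisfies X ⊨ Y|do(s_Z)), then it is Irred₃: for every nonempty s_Z ⊆ Z, the relation s_Z ⊨ Y|do(X ∪ (Z∖s_Z)) holds or the relation s_Z ⊨ Y|do(Z∖s_Z) holds. -/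
/-- An intervention family on a finite type `V` of observed variables with value
types `α i`: to every finite subset `I ⊆ V` and every assignment of values on `I`
it assigns a probability mass function on full assignments. -/
abbrev InterventionFamily (V : Type) [DecidableEq V] (α : V → Type) : Type :=
  ∀ I : Finset V, (∀ i : I, α i) → PMF (∀ i, α i)

/-- Restriction of a full assignment to the coordinates in `Y`. -/
def restrictTo {V : Type} {α : V → Type} (Y : Finset V) (g : ∀ i, α i) :
    ∀ i : Y, α i := fun i => g i

/-- Combination of an assignment on `X` and an assignment on `Z` into an
assignment on `X ∪ Z` (giving precedence to the one on `X`). -/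
def combine {V : Type} [DecidableEq V] {α : V → Type} {X Z : Finset V}
    (xv : ∀ i : X, α i) (zv : ∀ i : Z, α i) : ∀ i : (X ∪ Z : Finset V), α i :=
  fun i => if h : (i : V) ∈ X then xv ⟨i, h⟩
    else zv ⟨i, (Finset.mem_union.mp i.2).resolve_left h⟩

/-- The affects relation `X ⊨ Y|do(Z)`: there exist assignments `x` on `X` and `z`
on `Z` such that the marginal on `Y` of the intervened distribution `D (X∪Z) (x⊕z)`
differs from the marginal on `Y` of `D Z z`. -/
def affects {V : Type} [DecidableEq V] {α : V → Type}
    (D : InterventionFamily V α) (X Y Z : Finset V) : Prop :=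
  ∃ (xv : ∀ i : X, α i) (zv : ∀ i : Z, α i),
    PMF.map (restrictTo Y) (D (X ∪ Z) (combine xv zv)) ≠
      PMF.map (restrictTo Y) (D Z zv)

private lemma D_congr {V : Type} [DecidableEq V] {α : V → Type}
    (D : InterventionFamily V α) {I J : Finset V} (h : I = J)
    {f : ∀ i : I, α i} {g : ∀ i : J, α i}
    (hfg : ∀ v (hI : v ∈ I) (hJ : v ∈ J), f ⟨v, hI⟩ = g ⟨v, hJ⟩) :
    D I f = D J g := by
  subst h
  have : f = g := funext fun i => hfg i i.2 i.2
  rw [this]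

/-- If `X ⊨ Y|do(Z)` holds and is Clus₃ (`Z ≠ ∅` and no `s_Z ⊊ Z` satisfies
`X ⊨ Y|do(s_Z)`), then it is Irred₃: for every nonempty `s_Z ⊆ Z`, the relation
`s_Z ⊨ Y|do(X ∪ (Z∖s_Z))` holds or the relation `s_Z ⊨ Y|do(Z∖s_Z)` holds. -/
theorem clus3_implies_irred3 {V : Type} [Fintype V] [DecidableEq V] {α : V → Type}
    [∀ i, Fintype (α i)] [∀ i, Nonempty (α i)]
    (D : InterventionFamily V α) (X Y Z : Finset V)
    (hXY : Disjoint X Y) (hXZ : Disjoint X Z) (hYZ : Disjoint Y Z)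
    (hX : X.Nonempty) (hY : Y.Nonempty)
    (haff : affects D X Y Z)
    (hZ : Z.Nonempty)
    (hclus : ∀ sZ : Finset V, sZ ⊂ Z → ¬ affects D X Y sZ) :
    ∀ sZ : Finset V, sZ ⊆ Z → sZ.Nonempty →
      (affects D sZ Y (X ∪ (Z \ sZ)) ∨ affects D sZ Y (Z \ sZ)) := by
  intro sZ hsub hne
  by_contra hcon
  push_neg at hcon
  obtain ⟨hA, hB⟩ := hcon
  rw [affects] at hA hB
  push_neg at hA hB
  obtain ⟨xv, zv, hne'⟩ := haff
  have hZdiff : Z \ sZ ⊂ Z := Finset.sdiff_ssubset hsub hne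
  have hC := hclus _ hZdiff
  rw [affects] at hC; push_neg at hC
  set s : ∀ i : sZ, α i := fun i => zv ⟨i, hsub i.2⟩ with hs
  set w : ∀ i : (Z \ sZ : Finset V), α i := fun i => zv ⟨i, (Finset.mem_sdiff.mp i.2).1⟩ with hw
  apply hne'
  have e1 : D (X ∪ Z) (combine xv zv) = D (sZ ∪ (X ∪ (Z \ sZ))) (combine s (combine xv w)) := by
    apply D_congr
    · ext v
      simp only [Finset.mem_union, Finset.mem_sdiff]
      constructor
      · rintro (h | h)
        · exact Or.inr (Or.inl h)
        · by_cases hv : v ∈ sZ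
          · exact Or.inl hv
          · exact Or.inr (Or.inr ⟨h, hv⟩)
      · rintro (h | h | h)
        · exact Or.inr (hsub h)
        · exact Or.inl h
        · exact Or.inr h.1
    · intro v hI hJ
      simp only [combine]
      by_cases hvX : v ∈ X
      · have hvs : v ∉ sZ := fun h => (Finset.disjoint_left.mp hXZ hvX) (hsub h)
        rw [dif_pos hvX, dif_neg hvs, dif_pos hvX]
      · have hvZ : v ∈ Z := (Finset.mem_union.mp hI).resolve_left hvX
        rw [dif_neg hvX]
        by_cases hvs : v ∈ sZ
        · rw [dif_pos hvs]
        · rw [dif_neg hvs, dif_neg hvX]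
  have e2 : D Z zv = D (sZ ∪ (Z \ sZ)) (combine s w) := by
    apply D_congr
    · exact (Finset.union_sdiff_of_subset hsub).symm
    · intro v hI hJ
      simp only [combine]
      by_cases hvs : v ∈ sZ
      · rw [dif_pos hvs]
      · rw [dif_neg hvs]
  rw [e1, e2, hA s (combine xv w), hC xv w, hB s w]
end
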